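/- arXiv:2104.08407 — 2 statements merged into one kernel-verified Lean document; each statement's English description precedes it below -/
import Mathlib

section
/- Let r ∈ ℕ. For all x, y ∈ ℂ with 0 < |x| < 1 (and |q^r x| < 1 automatically), the r-fold q-derivative in x of Φ₁ satisfies (D_{x,q}^r Φ₁(a,b;c;q;·,y))(x) = ((a;q)_r (b;q)_r / ((c;q)_r (1−q)^r)) · Φ₁(a q^r, b q^r; c q^r; q; x, y). -/
open scoped BigOperators

noncomputable section

/-- The q-shifted factorial `(a;q)_n = ∏_{r=0}^{n-1} (1 - a q^r)`. -/
def qPoch (q a : ℂ) (n : ℕ) : ℂ := ∏ r ∈ Finset.range n, (1 - a * q ^ r)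

/-- The basic Humbert function `Φ₁(a,b;c;q;x,y)` as a double series over `ℕ × ℕ`. -/
def Phi1 (q a b c x y : ℂ) : ℂ :=
  ∑' p : ℕ × ℕ,
    qPoch q a (p.1 + p.2) * qPoch q b p.1 * x ^ p.1 * y ^ p.2 /
      (qPoch q c (p.1 + p.2) * qPoch q q p.1 * qPoch q q p.2)

/-- The basic Humbert function `Φ₂(a,b;c;q;x,y)` as a double series over `ℕ × ℕ`. -/
def Phi2 (q a b c x y : ℂ) : ℂ :=
  ∑' p : ℕ × ℕ,
    qPoch q a p.1 * qPoch q b p.2 * x ^ p.1 * y ^ p.2 /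
      (qPoch q c (p.1 + p.2) * qPoch q q p.1 * qPoch q q p.2)

/-- The basic Humbert function `Φ₃(a;b;q;x,y)` as a double series over `ℕ × ℕ`. -/
def Phi3 (q a b x y : ℂ) : ℂ :=
  ∑' p : ℕ × ℕ,
    qPoch q a p.1 * x ^ p.1 * y ^ p.2 /
      (qPoch q b (p.1 + p.2) * qPoch q q p.1 * qPoch q q p.2)

/-- The one-variable q-difference operator. -/
def qDiff (q : ℂ) (f : ℂ → ℂ) : ℂ → ℂ := fun x => (f x - f (q * x)) / ((1 - q) * x)

/-- The q-difference operator in the first variable of a two-variable function. -/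
def qDx (q : ℂ) (f : ℂ → ℂ → ℂ) : ℂ → ℂ → ℂ :=
  fun x y => (f x y - f (q * x) y) / ((1 - q) * x)

/-- The q-difference operator in the second variable of a two-variable function. -/
def qDy (q : ℂ) (f : ℂ → ℂ → ℂ) : ℂ → ℂ → ℂ :=
  fun x y => (f x y - f x (q * y)) / ((1 - q) * y)

/-- The infinite q-shifted factorial `(a;q)_∞ = ∏_{r=0}^∞ (1 - a q^r)`. -/
def qPochInf (q a : ℂ) : ℂ := ∏' r : ℕ, (1 - a * q ^ r)

/-! ### Auxiliary material -/

/-- The general term of the `Φ₁` double series. -/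
def phiTerm (q a b c x y : ℂ) (p : ℕ × ℕ) : ℂ :=
  qPoch q a (p.1 + p.2) * qPoch q b p.1 * x ^ p.1 * y ^ p.2 /
    (qPoch q c (p.1 + p.2) * qPoch q q p.1 * qPoch q q p.2)

lemma Phi1_eq_tsum (q a b c x y : ℂ) : Phi1 q a b c x y = ∑' p, phiTerm q a b c x y p := rfl

lemma qPoch_zero (q a : ℂ) : qPoch q a 0 = 1 := by simp [qPoch]

lemma qPoch_succ (q a : ℂ) (n : ℕ) :
    qPoch q a (n + 1) = qPoch q a n * (1 - a * q ^ n) := Finset.prod_range_succ _ _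

lemma qPoch_succ' (q a : ℂ) (n : ℕ) :
    qPoch q a (n + 1) = (1 - a) * qPoch q (a * q) n := by
  rw [qPoch, Finset.prod_range_succ']
  simp only [pow_zero, mul_one, qPoch]
  rw [mul_comm]
  congr 1
  refine Finset.prod_congr rfl fun i _ => ?_
  ring_nf

lemma qPoch_ne_zero {q a : ℂ} (hq : q ≠ 0) (ha : ∀ m : ℕ, a ≠ q ^ (-(m : ℤ))) (n : ℕ) :
    qPoch q a n ≠ 0 := by
  rw [qPoch]
  refine Finset.prod_ne_zero_iff.2 fun i _ => ?_
  intro h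
  apply ha i
  have h1 : a * q ^ i = 1 := by linear_combination -h
  rw [zpow_neg, zpow_natCast]
  exact eq_inv_of_mul_eq_one_left h1

lemma q_ne_qzpow {q : ℂ} (hq0 : 0 < ‖q‖) (hq1 : ‖q‖ < 1) :
    ∀ m : ℕ, q ≠ q ^ (-(m : ℤ)) := by
  intro m h
  have h2 : ‖q‖ = (‖q‖ ^ m)⁻¹ := by
    rw [← zpow_natCast (‖q‖) m, ← zpow_neg, ← norm_zpow]
    exact congrArg _ h
  have hle : ‖q‖ ^ m ≤ 1 := pow_le_one₀ hq0.le hq1.le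
  have hpos : 0 < ‖q‖ ^ m := pow_pos hq0 m
  have : (1 : ℝ) ≤ (‖q‖ ^ m)⁻¹ := (one_le_inv₀ hpos).2 hle
  rw [← h2] at this
  linarith

lemma shift_ne {q c : ℂ} (hq : q ≠ 0) (hc : ∀ m : ℕ, c ≠ q ^ (-(m : ℤ))) (r : ℕ) :
    ∀ m : ℕ, c * q ^ r ≠ q ^ (-(m : ℤ)) := by
  intro m h
  apply hc (m + r)
  have hqr : (q : ℂ) ^ r ≠ 0 := pow_ne_zero _ hq
  have h2 : c = q ^ (-(m : ℤ)) * (q ^ r)⁻¹ := by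
    rw [← h, mul_inv_cancel_right₀ hqr]
  rw [h2, ← zpow_natCast q r, ← zpow_neg, ← zpow_add₀ hq]
  congr 1
  push_cast
  ring

lemma sum_geom_le {r : ℝ} (h0 : 0 ≤ r) (h1 : r < 1) (n : ℕ) :
    ∑ i ∈ Finset.range n, r ^ i ≤ (1 - r)⁻¹ := by
  rw [← tsum_geometric_of_lt_one h0 h1]
  exact Summable.sum_le_tsum _ (fun i _ => pow_nonneg h0 i) (summable_geometric_of_lt_one h0 h1)

lemma qPoch_abs_le {q : ℂ} (hq0 : 0 ≤ ‖q‖) (hq1 : ‖q‖ < 1) (a : ℂ) (n : ℕ) :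
    ‖qPoch q a n‖ ≤
      Real.exp (‖a‖ * (1 - ‖q‖)⁻¹) := by
  rw [qPoch, norm_prod]
  calc ∏ i ∈ Finset.range n, ‖1 - a * q ^ i‖
      ≤ ∏ i ∈ Finset.range n, Real.exp (‖a‖ * ‖q‖ ^ i) := by
        refine Finset.prod_le_prod (fun i _ => norm_nonneg _) (fun i _ => ?_)
        have h1 : ‖1 - a * q ^ i‖ ≤ 1 + ‖a‖ * ‖q‖ ^ i := by
          calc ‖1 - a * q ^ i‖ ≤ ‖(1 : ℂ)‖ + ‖a * q ^ i‖ := by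
                exact (norm_sub_le _ _)
            _ = 1 + ‖a‖ * ‖q‖ ^ i := by
                simp [norm_mul, norm_pow]
        have h2 : 1 + ‖a‖ * ‖q‖ ^ i ≤
            Real.exp (‖a‖ * ‖q‖ ^ i) := by
          have := Real.add_one_le_exp (‖a‖ * ‖q‖ ^ i)
          linarith
        linarith
    _ = Real.exp (∑ i ∈ Finset.range n, ‖a‖ * ‖q‖ ^ i) := by
        rw [Real.exp_sum]
    _ ≤ Real.exp (‖a‖ * (1 - ‖q‖)⁻¹) := by
        apply Real.exp_le_exp.2
        rw [← Finset.mul_sum]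
        exact mul_le_mul_of_nonneg_left (sum_geom_le hq0 hq1 n) (norm_nonneg _)

lemma qPoch_abs_lb {q a : ℂ} (hq0 : 0 < ‖q‖) (hq1 : ‖q‖ < 1)
    (ha : ∀ m : ℕ, a ≠ q ^ (-(m : ℤ))) :
    ∃ δ : ℝ, 0 < δ ∧ ∀ n, δ ≤ ‖qPoch q a n‖ := by
  have hq : q ≠ 0 := by simpa using hq0.ne'
  have hpos : ∀ n, 0 < ‖qPoch q a n‖ := fun n =>
    norm_pos_iff.2 (qPoch_ne_zero hq ha n)
  -- choose N with small tail
  have hεpos : 0 < (1 - ‖q‖) / (2 * (‖a‖ + 1)) := by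
    apply div_pos (by linarith) (by positivity)
  obtain ⟨N, hN⟩ := exists_pow_lt_of_lt_one hεpos hq1
  -- tail sums are at most 1/2
  have htail : ∀ k, ∑ j ∈ Finset.range k, ‖a‖ * ‖q‖ ^ (N + j) ≤ 1 / 2 := by
    intro k
    have h1 : ∑ j ∈ Finset.range k, ‖a‖ * ‖q‖ ^ (N + j)
        = ‖a‖ * ‖q‖ ^ N * ∑ j ∈ Finset.range k, ‖q‖ ^ j := by
      rw [Finset.mul_sum]
      refine Finset.sum_congr rfl fun j _ => ?_
      rw [pow_add]; ring
    rw [h1]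
    have h2 : ∑ j ∈ Finset.range k, ‖q‖ ^ j ≤ (1 - ‖q‖)⁻¹ :=
      sum_geom_le hq0.le hq1 k
    have h3 : ‖a‖ * ‖q‖ ^ N ≤
        ‖a‖ * ((1 - ‖q‖) / (2 * (‖a‖ + 1))) :=
      mul_le_mul_of_nonneg_left hN.le (norm_nonneg _)
    have h4 : 0 ≤ ∑ j ∈ Finset.range k, ‖q‖ ^ j :=
      Finset.sum_nonneg fun j _ => pow_nonneg hq0.le j
    have h5 : ‖a‖ * ‖q‖ ^ N * ∑ j ∈ Finset.range k, ‖q‖ ^ j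
        ≤ ‖a‖ * ((1 - ‖q‖) / (2 * (‖a‖ + 1))) *
            (1 - ‖q‖)⁻¹ := by
      apply mul_le_mul h3 h2 h4
      positivity
    have hc1 : (1 - ‖q‖) * (1 - ‖q‖)⁻¹ = 1 :=
      mul_inv_cancel₀ (by linarith)
    have h6 : ‖a‖ * ((1 - ‖q‖) / (2 * (‖a‖ + 1))) *
        (1 - ‖q‖)⁻¹ = ‖a‖ / (2 * (‖a‖ + 1)) := by
      calc ‖a‖ * ((1 - ‖q‖) / (2 * (‖a‖ + 1))) *
            (1 - ‖q‖)⁻¹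
          = ‖a‖ * (2 * (‖a‖ + 1))⁻¹ *
              ((1 - ‖q‖) * (1 - ‖q‖)⁻¹) := by ring
        _ = ‖a‖ / (2 * (‖a‖ + 1)) := by
              rw [hc1, mul_one, div_eq_mul_inv]
    rw [h6] at h5
    have h7 : ‖a‖ / (2 * (‖a‖ + 1)) ≤ 1 / 2 := by
      rw [div_le_div_iff₀ (by positivity) (by norm_num)]
      nlinarith [norm_nonneg a]
    linarith
  -- main induction
  have hkey : ∀ k, ‖qPoch q a N‖ *
      (1 - ∑ j ∈ Finset.range k, ‖a‖ * ‖q‖ ^ (N + j))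
      ≤ ‖qPoch q a (N + k)‖ := by
    intro k
    induction k with
    | zero => simp
    | succ k ih =>
      have hsum : ∑ j ∈ Finset.range (k + 1), ‖a‖ * ‖q‖ ^ (N + j)
          = (∑ j ∈ Finset.range k, ‖a‖ * ‖q‖ ^ (N + j))
            + ‖a‖ * ‖q‖ ^ (N + k) := Finset.sum_range_succ _ _
      set S := ∑ j ∈ Finset.range k, ‖a‖ * ‖q‖ ^ (N + j) with hS
      set e := ‖a‖ * ‖q‖ ^ (N + k) with he
      have hSnn : 0 ≤ S := Finset.sum_nonneg fun j _ => by positivity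
      have henn : 0 ≤ e := by positivity
      have hS12 : S + e ≤ 1 / 2 := by rw [← hsum]; exact htail (k + 1)
      have hfac : 1 - e ≤ ‖1 - a * q ^ (N + k)‖ := by
        have := norm_sub_norm_le (1 : ℂ) (a * q ^ (N + k))
        simp only [norm_one, norm_mul, norm_pow] at this
        linarith
      have hstep : qPoch q a (N + (k + 1)) = qPoch q a (N + k) * (1 - a * q ^ (N + k)) := by
        rw [show N + (k + 1) = (N + k) + 1 by ring, qPoch_succ]
      rw [hstep, norm_mul, hsum]
      have h1 : ‖qPoch q a N‖ * (1 - S) * (1 - e)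
          ≤ ‖qPoch q a (N + k)‖ * ‖1 - a * q ^ (N + k)‖ := by
        apply mul_le_mul ih hfac (by linarith) (norm_nonneg _)
      have h2 : ‖qPoch q a N‖ * (1 - (S + e))
          ≤ ‖qPoch q a N‖ * (1 - S) * (1 - e) := by
        nlinarith [mul_nonneg (mul_nonneg (hpos N).le hSnn) henn]
      linarith
  -- combine
  have hbig : ∀ k, ‖qPoch q a N‖ / 2 ≤ ‖qPoch q a (N + k)‖ := by
    intro k
    have h1 := hkey k
    have h2 := htail k
    nlinarith [(hpos N).le]
  -- minimum over small indices
  set s := (Finset.range (N + 1)).image fun n => ‖qPoch q a n‖ with hs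
  have hsne : s.Nonempty := ⟨‖qPoch q a 0‖, Finset.mem_image.2 ⟨0, by simp⟩⟩
  set δ₀ := s.min' hsne with hδ₀
  have hδ₀pos : 0 < δ₀ := by
    obtain ⟨n, _, hn⟩ := Finset.mem_image.1 (s.min'_mem hsne)
    rw [hδ₀, ← hn]; exact hpos n
  have hδ₀N : δ₀ ≤ ‖qPoch q a N‖ :=
    s.min'_le _ (Finset.mem_image.2 ⟨N, Finset.self_mem_range_succ N, rfl⟩)
  refine ⟨δ₀ / 2, by linarith, fun n => ?_⟩
  rcases le_or_gt n N with h | h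
  · have : δ₀ ≤ ‖qPoch q a n‖ :=
      s.min'_le _ (Finset.mem_image.2 ⟨n, Finset.mem_range.2 (by omega), rfl⟩)
    linarith
  · obtain ⟨k, rfl⟩ : ∃ k, n = N + k := ⟨n - N, by omega⟩
    have := hbig k
    linarith

/-- Summability: geometric case. -/
lemma summable_phiTerm {q : ℂ} (a b c x y : ℂ) (hq0 : 0 < ‖q‖)
    (hq1 : ‖q‖ < 1) (hc : ∀ m : ℕ, c ≠ q ^ (-(m : ℤ)))
    (hx1 : ‖x‖ < 1) (hy1 : ‖y‖ < 1) :
    Summable (phiTerm q a b c x y) := by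
  obtain ⟨δc, hδc, hlbc⟩ := qPoch_abs_lb hq0 hq1 hc
  obtain ⟨δq, hδq, hlbq⟩ := qPoch_abs_lb hq0 hq1 (q_ne_qzpow hq0 hq1)
  set Ca := Real.exp (‖a‖ * (1 - ‖q‖)⁻¹) with hCa
  set Cb := Real.exp (‖b‖ * (1 - ‖q‖)⁻¹) with hCb
  have hCapos : 0 < Ca := Real.exp_pos _
  have hCbpos : 0 < Cb := Real.exp_pos _
  set K := Ca * Cb / (δc * (δq * δq)) with hK
  have hKpos : 0 < K := by positivity
  apply Summable.of_norm_bounded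
    (g := fun p : ℕ × ℕ => K * (‖x‖ ^ p.1 * ‖y‖ ^ p.2))
  · apply Summable.mul_left
    exact Summable.mul_of_nonneg (summable_geometric_of_lt_one (norm_nonneg _) hx1)
      (summable_geometric_of_lt_one (norm_nonneg _) hy1)
      (fun n => pow_nonneg (norm_nonneg _) n)
      (fun n => pow_nonneg (norm_nonneg _) n)
  · rintro ⟨n, k⟩
    have hnum : ‖qPoch q a (n + k) * qPoch q b n * x ^ n * y ^ k‖
        ≤ Ca * Cb * (‖x‖ ^ n * ‖y‖ ^ k) := by
      simp only [norm_mul, norm_pow]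
      have h1 := qPoch_abs_le hq0.le hq1 a (n + k)
      have h2 := qPoch_abs_le hq0.le hq1 b n
      have hxn : (0:ℝ) ≤ ‖x‖ ^ n := pow_nonneg (norm_nonneg _) n
      have hyk : (0:ℝ) ≤ ‖y‖ ^ k := pow_nonneg (norm_nonneg _) k
      calc ‖qPoch q a (n + k)‖ * ‖qPoch q b n‖ *
            ‖x‖ ^ n * ‖y‖ ^ k
          = ‖qPoch q a (n + k)‖ * ‖qPoch q b n‖ *
            (‖x‖ ^ n * ‖y‖ ^ k) := by ring
        _ ≤ Ca * Cb * (‖x‖ ^ n * ‖y‖ ^ k) := by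
            refine mul_le_mul_of_nonneg_right ?_ (by positivity)
            exact mul_le_mul h1 h2 (norm_nonneg _) hCapos.le
    have hden : δc * (δq * δq) ≤
        ‖qPoch q c (n + k) * qPoch q q n * qPoch q q k‖ := by
      simp only [norm_mul]
      have h12 : δc * δq ≤ ‖qPoch q c (n + k)‖ * ‖qPoch q q n‖ :=
        mul_le_mul (hlbc (n + k)) (hlbq n) hδq.le (norm_nonneg _)
      calc δc * (δq * δq) = δc * δq * δq := by ring
        _ ≤ ‖qPoch q c (n + k)‖ * ‖qPoch q q n‖ *
            ‖qPoch q q k‖ := by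
            refine mul_le_mul h12 (hlbq k) hδq.le ?_
            exact mul_nonneg (norm_nonneg _) (norm_nonneg _)
    have hdenpos : 0 < δc * (δq * δq) := by positivity
    rw [phiTerm]
    simp only [norm_div]
    calc ‖qPoch q a (n + k) * qPoch q b n * x ^ n * y ^ k‖ /
          ‖qPoch q c (n + k) * qPoch q q n * qPoch q q k‖
        ≤ (Ca * Cb * (‖x‖ ^ n * ‖y‖ ^ k)) / (δc * (δq * δq)) := by
          apply div_le_div₀ (by positivity) hnum hdenpos hden
      _ = K * (‖x‖ ^ n * ‖y‖ ^ k) := by rw [hK]; ring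

/-- Summability: terminating case. -/
lemma summable_phiTerm_term {q a : ℂ} (b c x y : ℂ) (hq : q ≠ 0) (m : ℕ)
    (hma : a = q ^ (-(m : ℤ))) :
    Summable (phiTerm q a b c x y) := by
  apply summable_of_ne_finset_zero (s := Finset.range (m + 1) ×ˢ Finset.range (m + 1))
  rintro ⟨n, k⟩ hp
  have hm : m < n + k := by
    simp only [Finset.mem_product, Finset.mem_range, not_and_or, not_lt] at hp
    omega
  have h0 : qPoch q a (n + k) = 0 := by
    apply Finset.prod_eq_zero (Finset.mem_range.2 hm)
    rw [hma, ← zpow_natCast q m, ← zpow_add₀ hq]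
    simp
  simp [phiTerm, h0]

/-- Non-summability when `a` avoids `q^{-m}` and `1 ≤ |y|`. -/
lemma not_summable_phiTerm {q a c : ℂ} (b x y : ℂ) (hq0 : 0 < ‖q‖)
    (hq1 : ‖q‖ < 1) (ha : ∀ m : ℕ, a ≠ q ^ (-(m : ℤ)))
    (hc : ∀ m : ℕ, c ≠ q ^ (-(m : ℤ))) (hy : 1 ≤ ‖y‖) :
    ¬ Summable (phiTerm q a b c x y) := by
  intro hs
  have hq : q ≠ 0 := by simpa using hq0.ne'
  obtain ⟨δa, hδa, hlba⟩ := qPoch_abs_lb hq0 hq1 ha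
  set Cc := Real.exp (‖c‖ * (1 - ‖q‖)⁻¹) with hCc
  set Cq := Real.exp (‖q‖ * (1 - ‖q‖)⁻¹) with hCq
  have hCcpos : 0 < Cc := Real.exp_pos _
  have hCqpos : 0 < Cq := Real.exp_pos _
  have hinj : Function.Injective (fun k : ℕ => ((0 : ℕ), k)) := by
    intro i j h; simpa using h
  have h0 : Summable (fun k : ℕ => phiTerm q a b c x y (0, k)) := hs.comp_injective hinj
  have htend : Filter.Tendsto (fun k : ℕ => ‖phiTerm q a b c x y (0, k)‖)
      Filter.atTop (nhds 0) := by
    simpa using h0.tendsto_atTop_zero.norm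
  set ε := δa / (Cc * Cq) with hε
  have hεpos : 0 < ε := by positivity
  obtain ⟨k, hk⟩ := (htend.eventually_lt_const hεpos).exists
  apply absurd hk
  push_neg
  have hval : phiTerm q a b c x y (0, k)
      = qPoch q a k * y ^ k / (qPoch q c k * qPoch q q k) := by
    simp [phiTerm, qPoch_zero]
  rw [hval]
  simp only [norm_div, norm_mul, norm_pow]
  have h1 : δa ≤ ‖qPoch q a k‖ * ‖y‖ ^ k := by
    have hyk : (1:ℝ) ≤ ‖y‖ ^ k := one_le_pow₀ hy
    nlinarith [hlba k, hδa]
  have h2 : ‖qPoch q c k‖ * ‖qPoch q q k‖ ≤ Cc * Cq := by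
    have hc1 := qPoch_abs_le hq0.le hq1 c k
    have hq1' := qPoch_abs_le hq0.le hq1 q k
    nlinarith [norm_nonneg (qPoch q c k),
      norm_nonneg (qPoch q q k)]
  have h3 : 0 < ‖qPoch q c k‖ * ‖qPoch q q k‖ :=
    mul_pos (norm_pos_iff.2 (qPoch_ne_zero hq hc k))
      (norm_pos_iff.2 (qPoch_ne_zero hq (q_ne_qzpow hq0 hq1) k))
  exact div_le_div₀ (by positivity) h1 h3 h2

/-- The single-step q-derivative identity (raw form). -/
lemma one_step {q c : ℂ} (a b x y : ℂ) (hq0 : 0 < ‖q‖) (hq1 : ‖q‖ < 1)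
    (hc : ∀ m : ℕ, c ≠ q ^ (-(m : ℤ))) (hx : x ≠ 0)
    (hsx : Summable (phiTerm q a b c x y)) (hsqx : Summable (phiTerm q a b c (q * x) y)) :
    (Phi1 q a b c x y - Phi1 q a b c (q * x) y) / ((1 - q) * x) =
      (1 - a) * (1 - b) / ((1 - c) * (1 - q)) * Phi1 q (a * q) (b * q) (c * q) x y := by
  have hq : q ≠ 0 := by simpa using hq0.ne'
  have hq1' : q ≠ 1 := by intro h; rw [h] at hq1; simp at hq1
  have h1q : (1 : ℂ) - q ≠ 0 := sub_ne_zero.2 (Ne.symm hq1')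
  have hqq : ∀ n, qPoch q q n ≠ 0 := qPoch_ne_zero hq (q_ne_qzpow hq0 hq1)
  have hcc : ∀ n, qPoch q c n ≠ 0 := qPoch_ne_zero hq hc
  have h1c : (1 : ℂ) - c ≠ 0 := by
    have := hcc 1
    simpa [qPoch, Finset.prod_range_one] using this
  have hcq : ∀ n, qPoch q (c * q) n ≠ 0 := by
    intro n
    have := hcc (n + 1)
    rw [qPoch_succ'] at this
    exact fun h => this (by rw [h, mul_zero])
  -- the difference family
  set g : ℕ × ℕ → ℂ := fun p =>
    (phiTerm q a b c x y p - phiTerm q a b c (q * x) y p) / ((1 - q) * x) with hg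
  have step1 : (Phi1 q a b c x y - Phi1 q a b c (q * x) y) / ((1 - q) * x) = ∑' p, g p := by
    rw [Phi1_eq_tsum, Phi1_eq_tsum, ← Summable.tsum_sub hsx hsqx, ← tsum_div_const]
  rw [step1]
  -- reindex
  set e : ℕ × ℕ → ℕ × ℕ := fun p => (p.1 + 1, p.2) with he
  have hinj : Function.Injective e := by
    rintro ⟨n, k⟩ ⟨n', k'⟩ h
    simp only [he, Prod.mk.injEq] at h
    exact Prod.ext (by omega) h.2
  have hzero : ∀ k : ℕ, g (0, k) = 0 := by
    intro k
    simp only [hg, phiTerm, pow_zero]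
    simp
  have hsupp : Function.support g ⊆ Set.range e := by
    rintro ⟨n, k⟩ hp
    cases n with
    | zero => exact absurd (hzero k) hp
    | succ n => exact ⟨(n, k), rfl⟩
  rw [← hinj.tsum_eq hsupp]
  -- pointwise identity
  have hkey : ∀ p : ℕ × ℕ, g (e p) =
      (1 - a) * (1 - b) / ((1 - c) * (1 - q)) * phiTerm q (a * q) (b * q) (c * q) x y p := by
    rintro ⟨n, k⟩
    simp only [hg, he, phiTerm]
    have hnk : n + 1 + k = (n + k) + 1 := by ring
    rw [hnk, qPoch_succ' q a, qPoch_succ' q b, qPoch_succ' q c, qPoch_succ q q]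
    have hqn1 : (1 : ℂ) - q * q ^ n ≠ 0 := by
      have := hqq (n + 1)
      rw [qPoch_succ] at this
      exact fun h => this (by rw [h, mul_zero])
    have hA1 : qPoch q (c * q) (n + k) ≠ 0 := hcq (n + k)
    have hA2 : qPoch q q n ≠ 0 := hqq n
    have hA3 : qPoch q q k ≠ 0 := hqq k
    rw [div_sub_div_same, div_div, div_mul_div_comm, div_eq_div_iff]
    · ring
    · apply_rules [mul_ne_zero] <;> assumption
    · apply_rules [mul_ne_zero] <;> assumption
  calc ∑' p, g (e p)
      = ∑' p, (1 - a) * (1 - b) / ((1 - c) * (1 - q)) *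
          phiTerm q (a * q) (b * q) (c * q) x y p := tsum_congr hkey
    _ = (1 - a) * (1 - b) / ((1 - c) * (1 - q)) * Phi1 q (a * q) (b * q) (c * q) x y := by
        rw [tsum_mul_left, Phi1_eq_tsum]

/-- Combining the constant factors across one step. -/
lemma step_main {q c : ℂ} (a b x y : ℂ) (r : ℕ) (hq0 : 0 < ‖q‖)
    (hq1 : ‖q‖ < 1) (hc : ∀ m : ℕ, c ≠ q ^ (-(m : ℤ))) (hx : x ≠ 0)
    (hs1 : Summable (phiTerm q (a * q ^ r) (b * q ^ r) (c * q ^ r) x y))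
    (hs2 : Summable (phiTerm q (a * q ^ r) (b * q ^ r) (c * q ^ r) (q * x) y)) :
    qPoch q a r * qPoch q b r / (qPoch q c r * (1 - q) ^ r) *
      ((Phi1 q (a * q ^ r) (b * q ^ r) (c * q ^ r) x y -
        Phi1 q (a * q ^ r) (b * q ^ r) (c * q ^ r) (q * x) y) / ((1 - q) * x)) =
    qPoch q a (r + 1) * qPoch q b (r + 1) / (qPoch q c (r + 1) * (1 - q) ^ (r + 1)) *
      Phi1 q (a * q ^ (r + 1)) (b * q ^ (r + 1)) (c * q ^ (r + 1)) x y := by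
  have hq : q ≠ 0 := by simpa using hq0.ne'
  have hq1' : q ≠ 1 := by intro h; rw [h] at hq1; simp at hq1
  have h1q : (1 : ℂ) - q ≠ 0 := sub_ne_zero.2 (Ne.symm hq1')
  have hcr := shift_ne hq hc r
  rw [one_step (a * q ^ r) (b * q ^ r) x y hq0 hq1 hcr hx hs1 hs2]
  have hpow : ∀ u : ℂ, u * q ^ (r + 1) = u * q ^ r * q := by
    intro u; rw [pow_succ]; ring
  rw [hpow a, hpow b, hpow c]
  rw [qPoch_succ q a, qPoch_succ q b, qPoch_succ q c, pow_succ (1 - q)]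
  have hPc : qPoch q c r ≠ 0 := qPoch_ne_zero hq hc r
  have h1cr : (1 : ℂ) - c * q ^ r ≠ 0 := by
    have := qPoch_ne_zero hq hcr 1
    simpa [qPoch, Finset.prod_range_one] using this
  have hE : ((1 : ℂ) - q) ^ r ≠ 0 := pow_ne_zero _ h1q
  field_simp

/-- r-fold q-derivative of Φ₁ in x. -/
theorem phi1_qderiv_x (q a b c : ℂ) (hq0 : 0 < ‖q‖) (hq1 : ‖q‖ < 1)
    (hc : ∀ m : ℕ, c ≠ q ^ (-(m : ℤ))) (r : ℕ) (x y : ℂ)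
    (hx0 : 0 < ‖x‖) (hx1 : ‖x‖ < 1) :
    (qDiff q)^[r] (fun t => Phi1 q a b c t y) x =
      qPoch q a r * qPoch q b r / (qPoch q c r * (1 - q) ^ r) *
        Phi1 q (a * q ^ r) (b * q ^ r) (c * q ^ r) x y := by
  have hq : q ≠ 0 := by simpa using hq0.ne'
  suffices H : ∀ (r : ℕ) (x : ℂ), 0 < ‖x‖ → ‖x‖ < 1 →
      (qDiff q)^[r] (fun t => Phi1 q a b c t y) x =
      qPoch q a r * qPoch q b r / (qPoch q c r * (1 - q) ^ r) *
        Phi1 q (a * q ^ r) (b * q ^ r) (c * q ^ r) x y by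
    exact H r x hx0 hx1
  intro r
  induction r with
  | zero =>
    intro x hx0 hx1
    simp [qPoch_zero]
  | succ r IH =>
    intro x hx0 hx1
    have hxne : x ≠ 0 := by simpa using hx0.ne'
    have hqx0 : 0 < ‖q * x‖ := by rw [norm_mul]; positivity
    have hqx1 : ‖q * x‖ < 1 := by
      rw [norm_mul]
      calc ‖q‖ * ‖x‖ ≤ 1 * ‖x‖ := by nlinarith
        _ < 1 := by simpa using hx1
    rw [Function.iterate_succ_apply', qDiff, IH x hx0 hx1, IH (q * x) hqx0 hqx1]
    rw [← mul_sub, mul_div_assoc]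
    by_cases hy1 : ‖y‖ < 1
    · exact step_main a b x y r hq0 hq1 hc hxne
        (summable_phiTerm _ _ _ _ _ hq0 hq1 (shift_ne hq hc r) hx1 hy1)
        (summable_phiTerm _ _ _ _ _ hq0 hq1 (shift_ne hq hc r) hqx1 hy1)
    · push_neg at hy1
      by_cases ha : ∃ m : ℕ, a = q ^ (-(m : ℤ))
      · obtain ⟨m, hma⟩ := ha
        rcases le_or_gt r m with hrm | hmr
        · -- terminating shift
          have hshift : a * q ^ r = q ^ (-((m - r : ℕ) : ℤ)) := by
            rw [hma, ← zpow_natCast q r, ← zpow_add₀ hq]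
            congr 1
            omega
          exact step_main a b x y r hq0 hq1 hc hxne
            (summable_phiTerm_term _ _ _ _ hq _ hshift)
            (summable_phiTerm_term _ _ _ _ hq _ hshift)
        · -- the prefactor vanishes
          have hPa : qPoch q a r = 0 := by
            apply Finset.prod_eq_zero (Finset.mem_range.2 hmr)
            rw [hma, ← zpow_natCast q m, ← zpow_add₀ hq]
            simp
          rw [qPoch_succ q a, hPa]
          simp
      · -- non-terminating, |y| ≥ 1 : everything vanishes
        push_neg at ha
        have hashift : ∀ (s : ℕ) (m : ℕ), a * q ^ s ≠ q ^ (-(m : ℤ)) :=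
          fun s => shift_ne hq ha s
        have hZ : ∀ (s : ℕ) (t : ℂ),
            Phi1 q (a * q ^ s) (b * q ^ s) (c * q ^ s) t y = 0 := by
          intro s t
          rw [Phi1_eq_tsum]
          exact tsum_eq_zero_of_not_summable
            (not_summable_phiTerm _ _ _ hq0 hq1 (hashift s) (shift_ne hq hc s) hy1)
        rw [hZ r x, hZ r (q * x), hZ (r + 1) x]
        simp
end
end

section
/- Assume in addition c ≠ 1, c ≠ q, and c q^{−1} ∉ {q^{−m} : m ∈ ℕ}. For all x, y ∈ ℂ with |x| < 1, the contiguous relation in the denominator parameter holds: Φ₁(a, b; c q^{−1}; q; x, y) = Φ₁(a, b; c; q; x, y) + (c x (1−a)(1−b)/((q−c)(1−c))) · Φ₁(aq, bq; cq; q; x, y) + (c y (1−a)/((q−c)(1−c))) · Φ₁(aq, b; cq; q; qx, y). -/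
open scoped BigOperators

noncomputable section

set_option maxHeartbeats 1000000

namespace QAux


lemma qPoch_zero (q a : ℂ) : qPoch q a 0 = 1 := by simp [qPoch]

lemma qPoch_succ (q a : ℂ) (n : ℕ) : qPoch q a (n+1) = qPoch q a n * (1 - a * q ^ n) :=
  Finset.prod_range_succ _ _

lemma qPoch_succ' (q a : ℂ) (n : ℕ) : qPoch q a (n+1) = (1 - a) * qPoch q (a * q) n := by
  rw [qPoch, Finset.prod_range_succ', qPoch, mul_comm]
  congr 1
  · simp
  · exact Finset.prod_congr rfl fun k _ => by ring_nf

lemma qPoch_add (q a : ℂ) (n m : ℕ) :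
    qPoch q a (n + m) = qPoch q a n * ∏ i ∈ Finset.range m, (1 - a * q ^ (n + i)) :=
  Finset.prod_range_add _ _ _

lemma qPoch_ne_zero {q a : ℂ} (h : ∀ r : ℕ, a * q ^ r ≠ 1) (n : ℕ) : qPoch q a n ≠ 0 :=
  Finset.prod_ne_zero_iff.2 fun r _ => sub_ne_zero.2 fun he => (h r) he.symm

lemma geom_sum_le (ρ : ℝ) (h0 : 0 ≤ ρ) (h1 : ρ < 1) (n : ℕ) :
    ∑ i ∈ Finset.range n, ρ ^ i ≤ (1 - ρ)⁻¹ := by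
  have := (summable_geometric_of_lt_one h0 h1).sum_le_tsum (Finset.range n)
    (fun i _ => pow_nonneg h0 i)
  rwa [tsum_geometric_of_lt_one h0 h1] at this

lemma qPoch_norm_le {q : ℂ} (hq1 : ‖q‖ < 1) (a : ℂ) (k n : ℕ) :
    ‖qPoch q a (k + n)‖ ≤ ‖qPoch q a k‖ * Real.exp (‖a‖ / (1 - ‖q‖)) := by
  rw [qPoch_add, norm_mul]
  have hρ0 : (0:ℝ) ≤ ‖q‖ := norm_nonneg q
  refine mul_le_mul_of_nonneg_left ?_ (norm_nonneg _)
  calc ‖∏ i ∈ Finset.range n, (1 - a * q ^ (k + i))‖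
      = ∏ i ∈ Finset.range n, ‖1 - a * q ^ (k + i)‖ := norm_prod _ _
    _ ≤ ∏ i ∈ Finset.range n, Real.exp (‖a‖ * ‖q‖ ^ (k + i)) := by
        refine Finset.prod_le_prod (fun i _ => norm_nonneg _) (fun i _ => ?_)
        calc ‖1 - a * q ^ (k+i)‖ ≤ ‖(1:ℂ)‖ + ‖a * q ^ (k+i)‖ := norm_sub_le _ _
          _ = 1 + ‖a‖ * ‖q‖ ^ (k+i) := by rw [norm_one, norm_mul, norm_pow]
          _ ≤ Real.exp (‖a‖ * ‖q‖ ^ (k+i)) := by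
              have := Real.add_one_le_exp (‖a‖ * ‖q‖ ^ (k+i)); linarith
    _ = Real.exp (∑ i ∈ Finset.range n, ‖a‖ * ‖q‖ ^ (k + i)) := (Real.exp_sum _ _).symm
    _ ≤ Real.exp (‖a‖ / (1 - ‖q‖)) := by
        apply Real.exp_le_exp.2
        rw [div_eq_mul_inv, ← Finset.mul_sum]
        refine mul_le_mul_of_nonneg_left ?_ (norm_nonneg a)
        calc ∑ i ∈ Finset.range n, ‖q‖ ^ (k + i) ≤ ∑ i ∈ Finset.range n, ‖q‖ ^ i := by
              refine Finset.sum_le_sum fun i _ => ?_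
              exact pow_le_pow_of_le_one hρ0 hq1.le (Nat.le_add_left i k)
          _ ≤ (1 - ‖q‖)⁻¹ := geom_sum_le _ hρ0 hq1 n

lemma qPoch_norm_le' {q : ℂ} (hq1 : ‖q‖ < 1) (a : ℂ) (n : ℕ) :
    ‖qPoch q a n‖ ≤ Real.exp (‖a‖ / (1 - ‖q‖)) := by
  have := qPoch_norm_le hq1 a 0 n
  simpa [qPoch_zero] using this

lemma weier (t : ℕ → ℝ) (h0 : ∀ i, 0 ≤ t i) (h1 : ∀ i, t i ≤ 1) (n : ℕ) :
    1 - ∑ i ∈ Finset.range n, t i ≤ ∏ i ∈ Finset.range n, (1 - t i) := by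
  induction n with
  | zero => simp
  | succ n ih =>
    rw [Finset.prod_range_succ, Finset.sum_range_succ]
    have h2 : (1 - ∑ i ∈ Finset.range n, t i) * (1 - t n) ≤
        (∏ i ∈ Finset.range n, (1 - t i)) * (1 - t n) :=
      mul_le_mul_of_nonneg_right ih (by linarith [h1 n])
    have h3 : 0 ≤ (∑ i ∈ Finset.range n, t i) * t n :=
      mul_nonneg (Finset.sum_nonneg fun i _ => h0 i) (h0 n)
    nlinarith [h0 n]


lemma qPoch_lower {q a : ℂ} (hq1 : ‖q‖ < 1) (h : ∀ r : ℕ, a * q ^ r ≠ 1) :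
    ∃ δ : ℝ, 0 < δ ∧ ∀ n, δ ≤ ‖qPoch q a n‖ := by
  have hρ0 : (0:ℝ) ≤ ‖q‖ := norm_nonneg q
  have h2 : Filter.Tendsto (fun N : ℕ => ‖a‖ * ‖q‖ ^ N) Filter.atTop (nhds 0) := by
    simpa using (tendsto_pow_atTop_nhds_zero_of_lt_one hρ0 hq1).const_mul ‖a‖
  have hpos : (0:ℝ) < (1 - ‖q‖)/2 := by linarith
  obtain ⟨N, hN⟩ := (h2.eventually_lt_const hpos).exists
  -- hN : ‖a‖ * ‖q‖ ^ N < (1 - ‖q‖)/2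
  set m : ℝ := (Finset.range (N+1)).inf' ⟨0, by simp⟩ (fun j => ‖qPoch q a j‖) with hm
  have hm0 : 0 < m := by
    rw [hm]
    exact (Finset.lt_inf'_iff _).2 fun i _ => norm_pos_iff.2 (qPoch_ne_zero h i)
  refine ⟨m/2, by linarith, fun n => ?_⟩
  rcases le_or_gt n N with hle | hlt
  · have : m ≤ ‖qPoch q a n‖ :=
      Finset.inf'_le _ (Finset.mem_range.2 (by omega))
    linarith
  · obtain ⟨s, rfl⟩ : ∃ s, n = N + s := ⟨n - N, by omega⟩
    rw [qPoch_add, norm_mul]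
    have hmN : m ≤ ‖qPoch q a N‖ := Finset.inf'_le _ (Finset.mem_range.2 (by omega))
    have htail : (1:ℝ)/2 ≤ ‖∏ i ∈ Finset.range s, (1 - a * q ^ (N + i))‖ := by
      have hterm0 : ∀ i : ℕ, 0 ≤ ‖a‖ * ‖q‖ ^ (N + i) := fun i =>
        mul_nonneg (norm_nonneg a) (pow_nonneg hρ0 _)
      have hterm1 : ∀ i : ℕ, ‖a‖ * ‖q‖ ^ (N + i) ≤ 1 := by
        intro i
        have : ‖a‖ * ‖q‖ ^ (N + i) ≤ ‖a‖ * ‖q‖ ^ N := by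
          apply mul_le_mul_of_nonneg_left _ (norm_nonneg a)
          exact pow_le_pow_of_le_one hρ0 hq1.le (by omega)
        linarith
      have hsum : ∑ i ∈ Finset.range s, ‖a‖ * ‖q‖ ^ (N + i) ≤ 1/2 := by
        have e1 : ∀ i ∈ Finset.range s, ‖a‖ * ‖q‖ ^ (N + i)
            = (‖a‖ * ‖q‖ ^ N) * ‖q‖ ^ i := fun i _ => by rw [pow_add]; ring
        rw [Finset.sum_congr rfl e1, ← Finset.mul_sum]
        have h4 := geom_sum_le ‖q‖ hρ0 hq1 s
        have h5 : (0:ℝ) ≤ ∑ i ∈ Finset.range s, ‖q‖ ^ i :=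
          Finset.sum_nonneg fun i _ => pow_nonneg hρ0 i
        have h6 : (‖a‖ * ‖q‖ ^ N) * ∑ i ∈ Finset.range s, ‖q‖ ^ i
            ≤ ((1 - ‖q‖)/2) * (1 - ‖q‖)⁻¹ := by
          apply mul_le_mul hN.le h4 h5 (by linarith)
        have h7 : ((1 - ‖q‖)/2) * (1 - ‖q‖)⁻¹ = 1/2 := by
          rw [div_mul_eq_mul_div, mul_inv_cancel₀ (by linarith : (1:ℝ) - ‖q‖ ≠ 0)]
        linarith
      calc (1:ℝ)/2 = 1 - 1/2 := by norm_num
        _ ≤ 1 - ∑ i ∈ Finset.range s, ‖a‖ * ‖q‖ ^ (N + i) := by linarith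
        _ ≤ ∏ i ∈ Finset.range s, (1 - ‖a‖ * ‖q‖ ^ (N + i)) := weier _ hterm0 hterm1 s
        _ ≤ ∏ i ∈ Finset.range s, ‖1 - a * q ^ (N + i)‖ := by
            refine Finset.prod_le_prod (fun i _ => by linarith [hterm1 i]) (fun i _ => ?_)
            calc 1 - ‖a‖ * ‖q‖ ^ (N+i) = ‖(1:ℂ)‖ - ‖a * q ^ (N+i)‖ := by
                  rw [norm_one, norm_mul, norm_pow]
              _ ≤ ‖1 - a * q ^ (N+i)‖ := norm_sub_norm_le _ _
        _ = ‖∏ i ∈ Finset.range s, (1 - a * q ^ (N + i))‖ := (norm_prod _ _).symm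
    calc m/2 = m * (1/2) := by ring
      _ ≤ ‖qPoch q a N‖ * ‖∏ i ∈ Finset.range s, (1 - a * q ^ (N + i))‖ :=
        mul_le_mul hmN htail (by norm_num) (norm_nonneg _)


/-- the general term of a Φ₁-type series -/
def term (q α β γ ξ υ : ℂ) (p : ℕ × ℕ) : ℂ :=
  qPoch q α (p.1 + p.2) * qPoch q β p.1 * ξ ^ p.1 * υ ^ p.2 /
    (qPoch q γ (p.1 + p.2) * qPoch q q p.1 * qPoch q q p.2)

/-- sufficiency: the series is summable when the y-direction criterion holds -/
lemma term_summable {q : ℂ} (hq1 : ‖q‖ < 1) (α β γ ξ υ : ℂ)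
    (hγ : ∀ r : ℕ, γ * q ^ r ≠ 1) (hqq : ∀ r : ℕ, q * q ^ r ≠ 1) (hξ : ‖ξ‖ < 1)
    (hS : Summable fun k : ℕ => ‖qPoch q α k‖ * ‖υ‖ ^ k) :
    Summable (term q α β γ ξ υ) := by
  rw [← summable_norm_iff]
  obtain ⟨δ1, hδ1, hL1⟩ := qPoch_lower hq1 hγ
  obtain ⟨δ2, hδ2, hL2⟩ := qPoch_lower hq1 hqq
  set K : ℝ := Real.exp (‖α‖ / (1 - ‖q‖)) * Real.exp (‖β‖ / (1 - ‖q‖)) / (δ1 * δ2 * δ2)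
    with hK
  have hK0 : 0 ≤ K := by positivity
  have hsum : Summable fun p : ℕ × ℕ => K * (‖ξ‖ ^ p.1 * (‖qPoch q α p.2‖ * ‖υ‖ ^ p.2)) := by
    refine Summable.mul_left K ?_
    exact (summable_geometric_of_lt_one (norm_nonneg ξ) hξ).mul_of_nonneg hS
      (fun n => pow_nonneg (norm_nonneg ξ) n)
      (fun k => mul_nonneg (norm_nonneg _) (pow_nonneg (norm_nonneg υ) k))
  refine hsum.of_nonneg_of_le (fun p => norm_nonneg _) (fun p => ?_)
  obtain ⟨n, k⟩ := p
  have hden : δ1 * δ2 * δ2 ≤ ‖qPoch q γ (n + k) * qPoch q q n * qPoch q q k‖ := by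
    rw [norm_mul, norm_mul]
    have h1 := hL1 (n+k); have h2 := hL2 n; have h3 := hL2 k
    have : δ1 * δ2 ≤ ‖qPoch q γ (n+k)‖ * ‖qPoch q q n‖ :=
      mul_le_mul h1 h2 hδ2.le (norm_nonneg _)
    exact mul_le_mul this h3 hδ2.le (mul_nonneg (norm_nonneg _) (norm_nonneg _))
  have hnum : ‖qPoch q α (n + k) * qPoch q β n * ξ ^ n * υ ^ k‖ ≤
      (Real.exp (‖α‖ / (1 - ‖q‖)) * Real.exp (‖β‖ / (1 - ‖q‖))) *
        (‖ξ‖ ^ n * (‖qPoch q α k‖ * ‖υ‖ ^ k)) := by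
    rw [norm_mul, norm_mul, norm_mul, norm_pow, norm_pow]
    have h1 : ‖qPoch q α (n + k)‖ ≤ ‖qPoch q α k‖ * Real.exp (‖α‖ / (1 - ‖q‖)) := by
      rw [add_comm]; exact qPoch_norm_le hq1 α k n
    have h2 : ‖qPoch q β n‖ ≤ Real.exp (‖β‖ / (1 - ‖q‖)) := qPoch_norm_le' hq1 β n
    have e1 : (0:ℝ) < Real.exp (‖α‖ / (1 - ‖q‖)) := Real.exp_pos _
    have e2 : (0:ℝ) < Real.exp (‖β‖ / (1 - ‖q‖)) := Real.exp_pos _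
    calc ‖qPoch q α (n + k)‖ * ‖qPoch q β n‖ * ‖ξ‖ ^ n * ‖υ‖ ^ k
        ≤ (‖qPoch q α k‖ * Real.exp (‖α‖ / (1 - ‖q‖))) * Real.exp (‖β‖ / (1 - ‖q‖))
            * ‖ξ‖ ^ n * ‖υ‖ ^ k := by
          refine mul_le_mul_of_nonneg_right ?_ (pow_nonneg (norm_nonneg υ) k)
          refine mul_le_mul_of_nonneg_right ?_ (pow_nonneg (norm_nonneg ξ) n)
          exact mul_le_mul h1 h2 (norm_nonneg _)
            (mul_nonneg (norm_nonneg _) e1.le)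
      _ = (Real.exp (‖α‖ / (1 - ‖q‖)) * Real.exp (‖β‖ / (1 - ‖q‖))) *
            (‖ξ‖ ^ n * (‖qPoch q α k‖ * ‖υ‖ ^ k)) := by ring
  calc ‖term q α β γ ξ υ (n, k)‖
      = ‖qPoch q α (n + k) * qPoch q β n * ξ ^ n * υ ^ k‖ /
          ‖qPoch q γ (n + k) * qPoch q q n * qPoch q q k‖ := by
        rw [term, norm_div]
    _ ≤ ((Real.exp (‖α‖ / (1 - ‖q‖)) * Real.exp (‖β‖ / (1 - ‖q‖))) *
          (‖ξ‖ ^ n * (‖qPoch q α k‖ * ‖υ‖ ^ k))) / (δ1 * δ2 * δ2) := by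
        apply div_le_div₀ (by positivity) hnum (by positivity) hden
    _ = K * (‖ξ‖ ^ n * (‖qPoch q α k‖ * ‖υ‖ ^ k)) := by rw [hK]; ring

/-- necessity: summability implies the y-direction criterion (column n = 0) -/
lemma term_summable_nec {q : ℂ} (hq1 : ‖q‖ < 1) (α β γ ξ υ : ℂ)
    (hγ : ∀ r : ℕ, γ * q ^ r ≠ 1) (hqq : ∀ r : ℕ, q * q ^ r ≠ 1)
    (h : Summable (term q α β γ ξ υ)) :
    Summable fun k : ℕ => ‖qPoch q α k‖ * ‖υ‖ ^ k := by
  have hinj : Function.Injective (fun k : ℕ => ((0, k) : ℕ × ℕ)) := by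
    intro i j hij; simpa using hij
  have h0 : Summable fun k : ℕ => term q α β γ ξ υ (0, k) := h.comp_injective hinj
  have h1 : Summable fun k : ℕ => ‖term q α β γ ξ υ (0, k)‖ := summable_norm_iff.mpr h0
  set U : ℝ := Real.exp (‖γ‖ / (1 - ‖q‖)) * Real.exp (‖q‖ / (1 - ‖q‖)) with hU
  refine (h1.mul_left U).of_nonneg_of_le
    (fun k => mul_nonneg (norm_nonneg _) (pow_nonneg (norm_nonneg υ) k)) (fun k => ?_)
  have hterm : term q α β γ ξ υ (0, k) = qPoch q α k * υ ^ k / (qPoch q γ k * qPoch q q k) := by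
    rw [term]
    simp [qPoch_zero]
  have hne1 : qPoch q γ k ≠ 0 := qPoch_ne_zero hγ k
  have hne2 : qPoch q q k ≠ 0 := qPoch_ne_zero hqq k
  have heq : ‖qPoch q α k‖ * ‖υ‖ ^ k
      = ‖term q α β γ ξ υ (0, k)‖ * (‖qPoch q γ k‖ * ‖qPoch q q k‖) := by
    rw [hterm, norm_div, norm_mul, norm_mul, norm_pow]
    rw [div_mul_cancel₀]
    exact mul_ne_zero (norm_ne_zero_iff.mpr hne1) (norm_ne_zero_iff.mpr hne2)
  rw [heq]
  calc ‖term q α β γ ξ υ (0, k)‖ * (‖qPoch q γ k‖ * ‖qPoch q q k‖)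
      ≤ ‖term q α β γ ξ υ (0, k)‖ * U := by
        refine mul_le_mul_of_nonneg_left ?_ (norm_nonneg _)
        rw [hU]
        exact mul_le_mul (qPoch_norm_le' hq1 γ k) (qPoch_norm_le' hq1 q k)
          (norm_nonneg _) (Real.exp_pos _).le
    _ = U * ‖term q α β γ ξ υ (0, k)‖ := by ring

/-- transfer: S₂ → S₁ -/
lemma S_forward {q a υ : ℂ} (hS : Summable fun k : ℕ => ‖qPoch q (a*q) k‖ * ‖υ‖ ^ k) :
    Summable fun k : ℕ => ‖qPoch q a k‖ * ‖υ‖ ^ k := by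
  rw [← summable_nat_add_iff 1]
  have : (fun k : ℕ => ‖qPoch q a (k+1)‖ * ‖υ‖ ^ (k+1))
      = fun k : ℕ => (‖1 - a‖ * ‖υ‖) * (‖qPoch q (a*q) k‖ * ‖υ‖ ^ k) := by
    funext k
    rw [qPoch_succ', norm_mul, pow_succ]
    ring
  rw [this]
  exact hS.mul_left _

/-- transfer: S₁ → S₂ when a ≠ 1 -/
lemma S_backward {q a υ : ℂ} (ha : a ≠ 1)
    (hS : Summable fun k : ℕ => ‖qPoch q a k‖ * ‖υ‖ ^ k) :
    Summable fun k : ℕ => ‖qPoch q (a*q) k‖ * ‖υ‖ ^ k := by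
  by_cases hy : υ = 0
  · refine summable_of_ne_finset_zero (s := {0}) (fun k hk => ?_)
    have hk0 : k ≠ 0 := by simpa using hk
    simp [hy, zero_pow hk0]
  · have h2 : Summable fun k : ℕ => ‖qPoch q a (k+1)‖ * ‖υ‖ ^ (k+1) :=
      (summable_nat_add_iff 1).2 hS
    have ha' : ‖(1:ℂ) - a‖ ≠ 0 :=
      norm_ne_zero_iff.mpr (sub_ne_zero.mpr (Ne.symm ha))
    have hy' : ‖υ‖ ≠ 0 := norm_ne_zero_iff.mpr hy
    have hc : ‖1 - a‖ * ‖υ‖ ≠ 0 := mul_ne_zero ha' hy'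
    have : (fun k : ℕ => ‖qPoch q (a*q) k‖ * ‖υ‖ ^ k)
        = fun k : ℕ => (‖1 - a‖ * ‖υ‖)⁻¹ * (‖qPoch q a (k+1)‖ * ‖υ‖ ^ (k+1)) := by
      funext k
      rw [qPoch_succ', norm_mul, pow_succ, inv_mul_eq_div, eq_div_iff hc]
      ring
    rw [this]
    exact h2.mul_left _


def shiftn (f : ℕ × ℕ → ℂ) : ℕ × ℕ → ℂ :=
  fun p => match p.1 with | 0 => 0 | Nat.succ n => f (n, p.2)
def shiftk (f : ℕ × ℕ → ℂ) : ℕ × ℕ → ℂ :=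
  fun p => match p.2 with | 0 => 0 | Nat.succ k => f (p.1, k)

lemma shiftn_zero (f : ℕ × ℕ → ℂ) (k : ℕ) : shiftn f (0, k) = 0 := rfl
lemma shiftn_succ (f : ℕ × ℕ → ℂ) (n k : ℕ) : shiftn f (n+1, k) = f (n, k) := rfl
lemma shiftk_zero (f : ℕ × ℕ → ℂ) (n : ℕ) : shiftk f (n, 0) = 0 := rfl
lemma shiftk_succ (f : ℕ × ℕ → ℂ) (n k : ℕ) : shiftk f (n, k+1) = f (n, k) := rfl

section ptwise
variable {q a b c x y : ℂ}

lemma star (hq : q ≠ 0) (hqq : ∀ r : ℕ, q * q ^ r ≠ 1) (hcr : ∀ r : ℕ, c * q ^ r ≠ 1)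
    (hqc : q - c ≠ 0) (n k : ℕ) :
    term q a b (c * q⁻¹) x y (n, k)
      = term q a b c x y (n, k) * (1 + c * (1 - q ^ (n + k)) / (q - c)) := by
  have hqn : qPoch q q n ≠ 0 := qPoch_ne_zero hqq n
  have hqk : qPoch q q k ≠ 0 := qPoch_ne_zero hqq k
  simp only [term]
  generalize n + k = m
  cases m with
  | zero => simp [qPoch_zero]
  | succ j =>
    rw [qPoch_succ' q (c * q⁻¹) j, qPoch_succ q c j, inv_mul_cancel_right₀ hq c]
    have h1 : qPoch q c j ≠ 0 := qPoch_ne_zero hcr j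
    have h2 : (1:ℂ) - c * q ^ j ≠ 0 := sub_ne_zero.2 (Ne.symm (hcr j))
    have h5 : (1:ℂ) - c * q⁻¹ = (q - c) * q⁻¹ := by
      rw [sub_mul, mul_inv_cancel₀ hq]
    have h3 : (1:ℂ) - c * q⁻¹ ≠ 0 := by
      rw [h5]; exact mul_ne_zero hqc (inv_ne_zero hq)
    have hkey : (1:ℂ) + c * (1 - q ^ (j+1)) / (q - c) = ((1 - c * q ^ j) * q) / (q - c) := by
      rw [eq_div_iff hqc, add_mul, div_mul_cancel₀ _ hqc, one_mul, pow_succ]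
      ring
    have hD1 : (q - c) * q⁻¹ * qPoch q c j * qPoch q q n * qPoch q q k ≠ 0 :=
      mul_ne_zero (mul_ne_zero (mul_ne_zero (mul_ne_zero hqc (inv_ne_zero hq)) h1) hqn) hqk
    have hD2 : qPoch q c j * (1 - c * q ^ j) * qPoch q q n * qPoch q q k * (q - c) ≠ 0 := by
      apply_rules [mul_ne_zero]
    rw [hkey, div_mul_div_comm, h5, div_eq_div_iff hD1 hD2]
    have hu : q * q⁻¹ = 1 := mul_inv_cancel₀ hq
    linear_combination (-(qPoch q a (j+1) * qPoch q b n * x ^ n * y ^ k * (1 - c * q ^ j) *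
      qPoch q c j * qPoch q q n * qPoch q q k * (q - c))) * hu

lemma claimA (hqq : ∀ r : ℕ, q * q ^ r ≠ 1) (hcqr : ∀ r : ℕ, (c * q) * q ^ r ≠ 1)
    (h1c : (1:ℂ) - c ≠ 0) (hqc : q - c ≠ 0) (n k : ℕ) :
    term q a b c x y (n, k) * (c * (1 - q ^ n) / (q - c))
      = (c * x * (1 - a) * (1 - b) / ((q - c) * (1 - c))) *
          shiftn (term q (a * q) (b * q) (c * q) x y) (n, k) := by
  cases n with
  | zero => simp [shiftn_zero]
  | succ n =>
    rw [shiftn_succ]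
    simp only [term]
    have e : (n + 1) + k = (n + k) + 1 := by omega
    rw [e, qPoch_succ' q a (n+k), qPoch_succ' q c (n+k), qPoch_succ' q b n, qPoch_succ q q n]
    have h1 : qPoch q (c*q) (n+k) ≠ 0 := qPoch_ne_zero hcqr (n+k)
    have hqn : qPoch q q n ≠ 0 := qPoch_ne_zero hqq n
    have hqk : qPoch q q k ≠ 0 := qPoch_ne_zero hqq k
    have h2 : (1:ℂ) - q * q ^ n ≠ 0 := sub_ne_zero.2 (Ne.symm (hqq n))
    have hD1 : (1 - c) * qPoch q (c*q) (n+k) * (qPoch q q n * (1 - q * q ^ n)) * qPoch q q k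
        * (q - c) ≠ 0 := by apply_rules [mul_ne_zero]
    have hD2 : (q - c) * (1 - c) * (qPoch q (c*q) (n+k) * qPoch q q n * qPoch q q k) ≠ 0 := by
      apply_rules [mul_ne_zero]
    rw [div_mul_div_comm, div_mul_div_comm, div_eq_div_iff hD1 hD2]
    ring

lemma claimB (hqq : ∀ r : ℕ, q * q ^ r ≠ 1) (hcqr : ∀ r : ℕ, (c * q) * q ^ r ≠ 1)
    (h1c : (1:ℂ) - c ≠ 0) (hqc : q - c ≠ 0) (n k : ℕ) :
    term q a b c x y (n, k) * (c * q ^ n * (1 - q ^ k) / (q - c))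
      = (c * y * (1 - a) / ((q - c) * (1 - c))) *
          shiftk (term q (a * q) b (c * q) (q * x) y) (n, k) := by
  cases k with
  | zero => simp [shiftk_zero]
  | succ k =>
    rw [shiftk_succ]
    simp only [term]
    have e : n + (k + 1) = (n + k) + 1 := by omega
    rw [e, qPoch_succ' q a (n+k), qPoch_succ' q c (n+k), qPoch_succ q q k]
    have h1 : qPoch q (c*q) (n+k) ≠ 0 := qPoch_ne_zero hcqr (n+k)
    have hqn : qPoch q q n ≠ 0 := qPoch_ne_zero hqq n
    have hqk : qPoch q q k ≠ 0 := qPoch_ne_zero hqq k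
    have h2 : (1:ℂ) - q * q ^ k ≠ 0 := sub_ne_zero.2 (Ne.symm (hqq k))
    have hD1 : (1 - c) * qPoch q (c*q) (n+k) * qPoch q q n * (qPoch q q k * (1 - q * q ^ k))
        * (q - c) ≠ 0 := by apply_rules [mul_ne_zero]
    have hD2 : (q - c) * (1 - c) * (qPoch q (c*q) (n+k) * qPoch q q n * qPoch q q k) ≠ 0 := by
      apply_rules [mul_ne_zero]
    rw [mul_pow, div_mul_div_comm, div_mul_div_comm, div_eq_div_iff hD1 hD2]
    ring

lemma key (hq : q ≠ 0) (hqq : ∀ r : ℕ, q * q ^ r ≠ 1) (hcr : ∀ r : ℕ, c * q ^ r ≠ 1)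
    (hcqr : ∀ r : ℕ, (c * q) * q ^ r ≠ 1) (h1c : (1:ℂ) - c ≠ 0) (hqc : q - c ≠ 0)
    (p : ℕ × ℕ) :
    term q a b (c * q⁻¹) x y p
      = term q a b c x y p
        + (c * x * (1 - a) * (1 - b) / ((q - c) * (1 - c))) *
            shiftn (term q (a * q) (b * q) (c * q) x y) p
        + (c * y * (1 - a) / ((q - c) * (1 - c))) *
            shiftk (term q (a * q) b (c * q) (q * x) y) p := by
  obtain ⟨n, k⟩ := p
  rw [star hq hqq hcr hqc n k, ← claimA hqq hcqr h1c hqc n k, ← claimB hqq hcqr h1c hqc n k,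
    pow_add]
  field_simp
  ring

end ptwise

lemma tsum_shiftn (f : ℕ × ℕ → ℂ) : ∑' p, shiftn f p = ∑' p, f p := by
  have hinj : Function.Injective (fun p : ℕ × ℕ => ((p.1 + 1, p.2) : ℕ × ℕ)) := by
    intro p1 p2 h
    have h1 := congrArg Prod.fst h
    have h2 := congrArg Prod.snd h
    simp at h1 h2
    exact Prod.ext h1 h2
  have hsupp : Function.support (shiftn f) ⊆
      Set.range (fun p : ℕ × ℕ => ((p.1 + 1, p.2) : ℕ × ℕ)) := by
    rintro ⟨n, k⟩ hp
    cases n with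
    | zero => exact absurd rfl hp
    | succ n => exact ⟨(n, k), rfl⟩
  rw [← hinj.tsum_eq hsupp]
  exact tsum_congr fun p => rfl

lemma summable_shiftn {f : ℕ × ℕ → ℂ} (hf : Summable f) : Summable (shiftn f) := by
  have hinj : Function.Injective (fun p : ℕ × ℕ => ((p.1 + 1, p.2) : ℕ × ℕ)) := by
    intro p1 p2 h
    have h1 := congrArg Prod.fst h
    have h2 := congrArg Prod.snd h
    simp at h1 h2
    exact Prod.ext h1 h2
  have hzero : ∀ p ∉ Set.range (fun p : ℕ × ℕ => ((p.1 + 1, p.2) : ℕ × ℕ)), shiftn f p = 0 := by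
    rintro ⟨n, k⟩ hx
    cases n with
    | zero => rfl
    | succ n => exact absurd ⟨(n, k), rfl⟩ hx
  exact (hinj.summable_iff hzero).1 hf

lemma tsum_shiftk (f : ℕ × ℕ → ℂ) : ∑' p, shiftk f p = ∑' p, f p := by
  have hinj : Function.Injective (fun p : ℕ × ℕ => ((p.1, p.2 + 1) : ℕ × ℕ)) := by
    intro p1 p2 h
    have h1 := congrArg Prod.fst h
    have h2 := congrArg Prod.snd h
    simp at h1 h2
    exact Prod.ext h1 h2
  have hsupp : Function.support (shiftk f) ⊆
      Set.range (fun p : ℕ × ℕ => ((p.1, p.2 + 1) : ℕ × ℕ)) := by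
    rintro ⟨n, k⟩ hp
    cases k with
    | zero => exact absurd rfl hp
    | succ k => exact ⟨(n, k), rfl⟩
  rw [← hinj.tsum_eq hsupp]
  exact tsum_congr fun p => rfl

lemma summable_shiftk {f : ℕ × ℕ → ℂ} (hf : Summable f) : Summable (shiftk f) := by
  have hinj : Function.Injective (fun p : ℕ × ℕ => ((p.1, p.2 + 1) : ℕ × ℕ)) := by
    intro p1 p2 h
    have h1 := congrArg Prod.fst h
    have h2 := congrArg Prod.snd h
    simp at h1 h2
    exact Prod.ext h1 h2
  have hzero : ∀ p ∉ Set.range (fun p : ℕ × ℕ => ((p.1, p.2 + 1) : ℕ × ℕ)), shiftk f p = 0 := by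
    rintro ⟨n, k⟩ hx
    cases k with
    | zero => rfl
    | succ k => exact absurd ⟨(n, k), rfl⟩ hx
  exact (hinj.summable_iff hzero).1 hf

end QAux


namespace QAux
lemma Phi1_eq (q α β γ ξ υ : ℂ) : Phi1 q α β γ ξ υ = ∑' p : ℕ × ℕ, term q α β γ ξ υ p := rfl
end QAux

/-- contiguous relation of Φ₁ in the denominator parameter. -/
theorem phi1_contiguous_c (q a b c : ℂ) (hq0 : 0 < ‖q‖) (hq1 : ‖q‖ < 1)
    (hc : ∀ m : ℕ, c ≠ q ^ (-(m : ℤ))) (hc1 : c ≠ 1) (hcq : c ≠ q)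
    (hc' : ∀ m : ℕ, c * q⁻¹ ≠ q ^ (-(m : ℤ))) (x y : ℂ) (hx : ‖x‖ < 1) :
    Phi1 q a b (c * q⁻¹) x y =
      Phi1 q a b c x y
        + c * x * (1 - a) * (1 - b) / ((q - c) * (1 - c)) *
            Phi1 q (a * q) (b * q) (c * q) x y
        + c * y * (1 - a) / ((q - c) * (1 - c)) *
            Phi1 q (a * q) b (c * q) (q * x) y := by
  classical
  have hq : q ≠ 0 := by intro h; rw [h] at hq0; simp at hq0
  have hρ : ‖q‖ < 1 := by exact hq1
  have hxn : ‖x‖ < 1 := by exact hx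
  have hqq : ∀ r : ℕ, q * q ^ r ≠ 1 := by
    intro r h
    have h2 : ‖q * q ^ r‖ < 1 := by
      rw [norm_mul, norm_pow]
      have h3 : ‖q‖ ^ r ≤ 1 := pow_le_one₀ (norm_nonneg q) hρ.le
      nlinarith [norm_nonneg q]
    rw [h] at h2
    simp at h2
  have hcr : ∀ r : ℕ, c * q ^ r ≠ 1 := by
    intro r h
    apply hc r
    rw [zpow_neg, zpow_natCast]
    exact eq_inv_of_mul_eq_one_left h
  have hcqr : ∀ r : ℕ, (c * q) * q ^ r ≠ 1 := by
    intro r h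
    apply hcr (r + 1)
    have h2 : c * q ^ (r + 1) = (c * q) * q ^ r := by rw [pow_succ]; ring
    rw [h2]
    exact h
  have hc'r : ∀ r : ℕ, (c * q⁻¹) * q ^ r ≠ 1 := by
    intro r h
    apply hc' r
    rw [zpow_neg, zpow_natCast]
    exact eq_inv_of_mul_eq_one_left h
  have h1c : (1:ℂ) - c ≠ 0 := sub_ne_zero.2 (Ne.symm hc1)
  have hqc : q - c ≠ 0 := sub_ne_zero.2 (Ne.symm hcq)
  have hkey := fun p => QAux.key (a := a) (b := b) (x := x) (y := y) hq hqq hcr hcqr h1c hqc p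
  rw [QAux.Phi1_eq q a b (c * q⁻¹) x y, QAux.Phi1_eq q a b c x y,
    QAux.Phi1_eq q (a * q) (b * q) (c * q) x y, QAux.Phi1_eq q (a * q) b (c * q) (q * x) y]
  by_cases ha : a = 1
  · subst ha
    have hFG : ∀ p, QAux.term q 1 b (c * q⁻¹) x y p = QAux.term q 1 b c x y p := by
      intro p
      simpa using hkey p
    rw [tsum_congr hFG]
    simp
  by_cases hS1 : Summable (fun k : ℕ => ‖qPoch q a k‖ * ‖y‖ ^ k)
  · have hS2 : Summable (fun k : ℕ => ‖qPoch q (a * q) k‖ * ‖y‖ ^ k) := QAux.S_backward ha hS1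
    have hsG1 : Summable (QAux.term q a b c x y) :=
      QAux.term_summable hρ a b c x y hcr hqq hxn hS1
    have hsG2 : Summable (QAux.term q (a * q) (b * q) (c * q) x y) :=
      QAux.term_summable hρ (a * q) (b * q) (c * q) x y hcqr hqq hxn hS2
    have hqx : ‖q * x‖ < 1 := by
      rw [norm_mul]
      nlinarith [norm_nonneg q, norm_nonneg x]
    have hsG3 : Summable (QAux.term q (a * q) b (c * q) (q * x) y) :=
      QAux.term_summable hρ (a * q) b (c * q) (q * x) y hcqr hqq hqx hS2
    have hsG2' := QAux.summable_shiftn hsG2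
    have hsG3' := QAux.summable_shiftk hsG3
    set C2 := c * x * (1 - a) * (1 - b) / ((q - c) * (1 - c)) with hC2
    set C3 := c * y * (1 - a) / ((q - c) * (1 - c)) with hC3
    calc ∑' p, QAux.term q a b (c * q⁻¹) x y p
        = ∑' p, (QAux.term q a b c x y p
            + (C2 * QAux.shiftn (QAux.term q (a * q) (b * q) (c * q) x y) p
              + C3 * QAux.shiftk (QAux.term q (a * q) b (c * q) (q * x) y) p)) :=
          tsum_congr (fun p => by rw [hkey p]; ring)
      _ = (∑' p, QAux.term q a b c x y p)
            + ∑' p, (C2 * QAux.shiftn (QAux.term q (a * q) (b * q) (c * q) x y) p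
              + C3 * QAux.shiftk (QAux.term q (a * q) b (c * q) (q * x) y) p) :=
          Summable.tsum_add hsG1 ((hsG2'.mul_left C2).add (hsG3'.mul_left C3))
      _ = (∑' p, QAux.term q a b c x y p)
            + ((∑' p, C2 * QAux.shiftn (QAux.term q (a * q) (b * q) (c * q) x y) p)
              + ∑' p, C3 * QAux.shiftk (QAux.term q (a * q) b (c * q) (q * x) y) p) := by
          rw [Summable.tsum_add (hsG2'.mul_left C2) (hsG3'.mul_left C3)]
      _ = (∑' p, QAux.term q a b c x y p)
            + (C2 * (∑' p, QAux.shiftn (QAux.term q (a * q) (b * q) (c * q) x y) p)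
              + C3 * ∑' p, QAux.shiftk (QAux.term q (a * q) b (c * q) (q * x) y) p) := by
          rw [tsum_mul_left, tsum_mul_left]
      _ = (∑' p, QAux.term q a b c x y p)
            + (C2 * (∑' p, QAux.term q (a * q) (b * q) (c * q) x y p)
              + C3 * ∑' p, QAux.term q (a * q) b (c * q) (q * x) y p) := by
          rw [QAux.tsum_shiftn, QAux.tsum_shiftk]
      _ = (∑' p, QAux.term q a b c x y p)
            + C2 * (∑' p, QAux.term q (a * q) (b * q) (c * q) x y p)
            + C3 * ∑' p, QAux.term q (a * q) b (c * q) (q * x) y p := by ring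
  · have hnF : ¬ Summable (QAux.term q a b (c * q⁻¹) x y) := fun h =>
      hS1 (QAux.term_summable_nec hρ a b (c * q⁻¹) x y hc'r hqq h)
    have hnG1 : ¬ Summable (QAux.term q a b c x y) := fun h =>
      hS1 (QAux.term_summable_nec hρ a b c x y hcr hqq h)
    have hnG2 : ¬ Summable (QAux.term q (a * q) (b * q) (c * q) x y) := fun h =>
      hS1 (QAux.S_forward (QAux.term_summable_nec hρ (a * q) (b * q) (c * q) x y hcqr hqq h))
    have hnG3 : ¬ Summable (QAux.term q (a * q) b (c * q) (q * x) y) := fun h =>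
      hS1 (QAux.S_forward (QAux.term_summable_nec hρ (a * q) b (c * q) (q * x) y hcqr hqq h))
    rw [tsum_eq_zero_of_not_summable hnF, tsum_eq_zero_of_not_summable hnG1,
      tsum_eq_zero_of_not_summable hnG2, tsum_eq_zero_of_not_summable hnG3]
    ring
end
end
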